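/- Let A be an n×n real matrix, C a p×n real matrix, and x₀ ∈ ℝ^n. If C A^k x₀ = 0 for every k ∈ {0, 1, …, n−1} (i.e., x₀ lies in the kernel of the observability matrix col(C, CA, …, C A^{n−1})), then C · exp(t A) · x₀ = 0 for all t ∈ ℝ. -/

import Mathlib

open Matrix NormedSpace

attribute [local instance] Matrix.linftyOpNormedRing Matrix.linftyOpNormedAlgebra

private def obsMap {n p : ℕ} (C : Matrix (Fin p) (Fin n) ℝ) (x0 : Fin n → ℝ) :
    Matrix (Fin n) (Fin n) ℝ →ₗ[ℝ] (Fin p → ℝ) where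
  toFun M := C.mulVec (M.mulVec x0)
  map_add' M N := by simp [Matrix.add_mulVec, Matrix.mulVec_add]
  map_smul' c M := by simp [Matrix.smul_mulVec, Matrix.mulVec_smul]

private lemma aux_pow_zero {n p : ℕ} (A : Matrix (Fin n) (Fin n) ℝ)
    (C : Matrix (Fin p) (Fin n) ℝ) (x0 : Fin n → ℝ)
    (h : ∀ k : ℕ, k < n → C.mulVec ((A ^ k).mulVec x0) = 0) :
    ∀ k : ℕ, C.mulVec ((A ^ k).mulVec x0) = 0 := by
  intro k
  induction k using Nat.strong_induction_on with
  | _ k ih =>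
    by_cases hk : k < n
    · exact h k hk
    · push_neg at hk
      have hCH : A ^ n = ∑ i ∈ Finset.range n, (-(A.charpoly.coeff i)) • A ^ i := by
        have h0 : (Polynomial.aeval A) A.charpoly = 0 := A.aeval_self_charpoly
        have hdeg : A.charpoly.natDegree = n := by
          simpa using A.charpoly_natDegree_eq_dim
        rw [Polynomial.aeval_eq_sum_range' (n := n + 1) (by omega), Finset.sum_range_succ] at h0
        have hlead : A.charpoly.coeff n = 1 := by
          have := A.charpoly_monic
          rw [Polynomial.Monic, Polynomial.leadingCoeff, hdeg] at this
          exact this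
        rw [hlead, one_smul] at h0
        have := eq_neg_of_add_eq_zero_right h0
        rw [this, ← Finset.sum_neg_distrib]
        exact Finset.sum_congr rfl fun i _ => (neg_smul _ _).symm
      have hsplit : A ^ k = ∑ i ∈ Finset.range n, ((-(A.charpoly.coeff i)) • A ^ i) * A ^ (k - n) := by
        rw [← Finset.sum_mul, ← hCH, ← pow_add]
        congr 1
        omega
      have : C.mulVec ((A ^ k).mulVec x0) = obsMap C x0 (A ^ k) := rfl
      rw [this, hsplit, map_sum]
      refine Finset.sum_eq_zero fun i hi => ?_
      have hi' : i < n := Finset.mem_range.mp hi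
      show C.mulVec (((-(A.charpoly.coeff i)) • A ^ i * A ^ (k - n)).mulVec x0) = 0
      rw [smul_mul_assoc, ← pow_add, smul_mulVec, mulVec_smul,
        ih (i + (k - n)) (by omega), smul_zero]

/-- If `x₀` lies in the kernel of the observability matrix
`col(C, CA, …, C A^{n−1})`, i.e. `C A^k x₀ = 0` for all `k < n`, then
`C · exp(t A) · x₀ = 0` for all real `t`. -/
theorem unobservable_initial_condition_invisible_output
    {n p : ℕ} (A : Matrix (Fin n) (Fin n) ℝ) (C : Matrix (Fin p) (Fin n) ℝ)
    (x0 : Fin n → ℝ)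
    (h : ∀ k : ℕ, k < n → C.mulVec ((A ^ k).mulVec x0) = 0) :
    ∀ t : ℝ, C.mulVec ((NormedSpace.exp (t • A)).mulVec x0) = 0 := by
  intro t
  have hall := aux_pow_zero A C x0 h
  let L := (obsMap C x0).toContinuousLinearMap
  have hsum : Summable fun k : ℕ => ((k.factorial : ℝ)⁻¹) • (t • A) ^ k :=
    expSeries_summable' (𝕂 := ℝ) (t • A)
  have hmap := (hsum.hasSum.mapL L).tsum_eq
  have hexp : NormedSpace.exp (t • A) = ∑' k : ℕ, ((k.factorial : ℝ)⁻¹) • (t • A) ^ k := by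
    rw [exp_eq_tsum (𝕂 := ℝ)]
  have : C.mulVec ((NormedSpace.exp (t • A)).mulVec x0)
      = ∑' k : ℕ, L (((k.factorial : ℝ)⁻¹) • (t • A) ^ k) := by
    rw [hexp]; exact hmap.symm
  rw [this]
  have hzero : ∀ k : ℕ, L (((k.factorial : ℝ)⁻¹) • (t • A) ^ k) = 0 := by
    intro k
    show obsMap C x0 (((k.factorial : ℝ)⁻¹) • (t • A) ^ k) = 0
    rw [_root_.map_smul, smul_pow, _root_.map_smul]
    show (↑k.factorial : ℝ)⁻¹ • t ^ k • C.mulVec ((A ^ k).mulVec x0) = 0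
    rw [hall k, smul_zero, smul_zero]
  simp [hzero]
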